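/- (Reduction to optimal partial transport) Let n ≥ 1, r > 0, let B_r = B(0, r) be the open ball in ℝⁿ centered at the origin, and let 𝒱 be a real number with vol_n(B_r) ≤ 𝒱 < ∞. Let r^{#} > 0 be such that vol_n(B(0, r^{#})) = 𝒱. Then among all Borel probability measures μ on ℝⁿ satisfying μ(A) ≤ vol_n(A)/𝒱 for every Borel set A, the uniform measure P_{B(0, r^{#})} on the concentric ball B(0, r^{#}) minimizes W₂(μ, P_{B_r}), and it is the unique minimizer (up to almost-everywhere equality of densities). -/

import Mathlib

open MeasureTheory Metric Set
open scoped ENNReal NNReal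

noncomputable section

/-- The uniform probability measure on a set `S ⊆ ℝⁿ`: Lebesgue measure restricted to `S`
and normalized. -/
def unif {n : ℕ} (S : Set (EuclideanSpace ℝ (Fin n))) : Measure (EuclideanSpace ℝ (Fin n)) :=
  (volume S)⁻¹ • volume.restrict S

/-- The set of couplings of two measures `μ, ν` on `ℝⁿ`: measures on the product whose
marginals are `μ` and `ν`. -/
def couplings {n : ℕ} (μ ν : Measure (EuclideanSpace ℝ (Fin n))) :
    Set (Measure (EuclideanSpace ℝ (Fin n) × EuclideanSpace ℝ (Fin n))) :=
  {γ | γ.map Prod.fst = μ ∧ γ.map Prod.snd = ν}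

/-- The `L²`-Wasserstein distance between two measures on `ℝⁿ` (valued in `ℝ≥0∞`):
the infimum over all couplings `γ` of `(∫ ‖a − b‖² dγ(a, b))^{1/2}`. -/
def W2 {n : ℕ} (μ ν : Measure (EuclideanSpace ℝ (Fin n))) : ℝ≥0∞ :=
  ⨅ γ ∈ couplings μ ν, (∫⁻ w, edist w.1 w.2 ^ 2 ∂γ) ^ (1 / 2 : ℝ)


open scoped Pointwise

abbrev Esp (n : ℕ) : Type := EuclideanSpace ℝ (Fin n)

def cost {n : ℕ} (μ ν : Measure (Esp n)) : ℝ≥0∞ :=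
  ⨅ γ ∈ couplings μ ν, ∫⁻ w, edist w.1 w.2 ^ 2 ∂γ

lemma W2_eq_cost {n : ℕ} (μ ν : Measure (Esp n)) : W2 μ ν = cost μ ν ^ (1/2 : ℝ) := by
  rw [W2, cost, iInf_subtype', iInf_subtype']
  have := (ENNReal.orderIsoRpow (1/2) (by norm_num)).map_iInf
    (fun x : ↥(couplings μ ν) => ∫⁻ w, edist w.1 w.2 ^ 2 ∂(x : Measure (Esp n × Esp n)))
  simp only [ENNReal.orderIsoRpow_apply] at this
  exact this.symm

lemma unif_apply {n : ℕ} (S A : Set (Esp n)) (hA : MeasurableSet A) :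
    unif S A = (volume S)⁻¹ * volume (A ∩ S) := by
  rw [unif, Measure.smul_apply, Measure.restrict_apply hA, smul_eq_mul]

lemma unif_prob {n : ℕ} (S : Set (Esp n)) (h0 : volume S ≠ 0) (ht : volume S ≠ ⊤) :
    IsProbabilityMeasure (unif S) := by
  constructor
  rw [unif, Measure.smul_apply, Measure.restrict_apply_univ, smul_eq_mul,
    ENNReal.inv_mul_cancel h0 ht]

lemma lint_fst {n : ℕ} {μ ν : Measure (Esp n)} {γ} (hγ : γ ∈ couplings μ ν)
    (f : Esp n → ℝ≥0∞) (hf : Measurable f) : ∫⁻ w, f w.1 ∂γ = ∫⁻ a, f a ∂μ := by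
  rw [← hγ.1, lintegral_map hf measurable_fst]

lemma lint_snd {n : ℕ} {μ ν : Measure (Esp n)} {γ} (hγ : γ ∈ couplings μ ν)
    (f : Esp n → ℝ≥0∞) (hf : Measurable f) : ∫⁻ w, f w.2 ∂γ = ∫⁻ b, f b ∂ν := by
  rw [← hγ.2, lintegral_map hf measurable_snd]

lemma measurable_gaux {n : ℕ} : Measurable fun a : Esp n => ENNReal.ofReal (‖a‖^2) :=
  ((continuous_norm.pow 2).measurable).ennreal_ofReal

lemma pointwise_amgm {n : ℕ} (a b : Esp n) {δ : ℝ} (h0 : 0 < δ) (h1 : δ ≤ 1) :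
    ENNReal.ofReal ((1-δ) * ‖a‖^2) ≤ edist a b ^ 2 + ENNReal.ofReal ((1/δ - 1) * ‖b‖^2) := by
  have hreal : (1 - δ) * ‖a‖^2 ≤ dist a b ^ 2 + (1/δ - 1) * ‖b‖^2 := by
    rw [dist_eq_norm]
    have h2 : ‖a - b‖^2 = ‖a‖^2 - 2 * (inner ℝ a b : ℝ) + ‖b‖^2 := norm_sub_sq_real a b
    have h3 : (inner ℝ a b : ℝ) ≤ ‖a‖ * ‖b‖ := real_inner_le_norm a b
    rw [← mul_le_mul_iff_right₀ h0]
    have h5 : δ * (‖a-b‖^2 + (1/δ - 1) * ‖b‖^2) = δ * ‖a-b‖^2 + (1 - δ) * ‖b‖^2 := by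
      field_simp
    rw [h5, h2]
    nlinarith [sq_nonneg (δ * ‖a‖ - ‖b‖)]
  have hd : edist a b ^ 2 = ENNReal.ofReal (dist a b ^ 2) := by
    rw [edist_dist, ← ENNReal.ofReal_pow dist_nonneg]
  rw [hd, ← ENNReal.ofReal_add (by positivity)
    (mul_nonneg (by
      have : (1:ℝ) ≤ 1/δ := by rw [le_div_iff₀ h0]; linarith
      linarith) (sq_nonneg _))]
  exact ENNReal.ofReal_le_ofReal hreal

lemma lint_const_sq {n : ℕ} (μ : Measure (Esp n)) {c : ℝ} (hc : 0 ≤ c) :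
    ∫⁻ a, ENNReal.ofReal (c * ‖a‖^2) ∂μ
      = ENNReal.ofReal c * ∫⁻ a, ENNReal.ofReal (‖a‖^2) ∂μ := by
  rw [← lintegral_const_mul _ measurable_gaux]
  congr 1; funext a; rw [ENNReal.ofReal_mul hc]

lemma measurable_edistsq {n : ℕ} :
    Measurable fun w : Esp n × Esp n => edist w.1 w.2 ^ 2 :=
  measurable_edist.pow_const 2

lemma coupling_bound {n : ℕ} {μ ν : Measure (Esp n)} {γ} (hγ : γ ∈ couplings μ ν)
    {δ : ℝ} (h0 : 0 < δ) (h1 : δ ≤ 1) :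
    ENNReal.ofReal (1-δ) * ∫⁻ a, ENNReal.ofReal (‖a‖^2) ∂μ ≤
      (∫⁻ w, edist w.1 w.2 ^ 2 ∂γ)
        + ENNReal.ofReal (1/δ - 1) * ∫⁻ b, ENNReal.ofReal (‖b‖^2) ∂ν := by
  have h1d : (0:ℝ) ≤ 1/δ - 1 := by
    have : (1:ℝ) ≤ 1/δ := by rw [le_div_iff₀ h0]; linarith
    linarith
  have hm1 : Measurable fun a : Esp n => ENNReal.ofReal ((1-δ) * ‖a‖^2) :=
    ((continuous_const.mul (continuous_norm.pow 2)).measurable).ennreal_ofReal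
  have hm2 : Measurable fun a : Esp n => ENNReal.ofReal ((1/δ-1) * ‖a‖^2) :=
    ((continuous_const.mul (continuous_norm.pow 2)).measurable).ennreal_ofReal
  rw [← lint_const_sq μ (by linarith : (0:ℝ) ≤ 1 - δ), ← lint_const_sq ν h1d]
  calc ∫⁻ a, ENNReal.ofReal ((1-δ) * ‖a‖^2) ∂μ
      = ∫⁻ w, ENNReal.ofReal ((1-δ) * ‖w.1‖^2) ∂γ := (lint_fst hγ _ hm1).symm
    _ ≤ ∫⁻ w, (edist w.1 w.2 ^ 2 + ENNReal.ofReal ((1/δ-1) * ‖w.2‖^2)) ∂γ :=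
        lintegral_mono fun w => pointwise_amgm w.1 w.2 h0 h1
    _ = (∫⁻ w, edist w.1 w.2 ^ 2 ∂γ) + ∫⁻ w, ENNReal.ofReal ((1/δ-1) * ‖w.2‖^2) ∂γ :=
        lintegral_add_left measurable_edistsq _
    _ = _ := by rw [lint_snd hγ _ hm2]

lemma preimage_scaling_ball {n : ℕ} (r rS : ℝ) (hr : 0 < r) (hrS : 0 < rS) :
    (fun a : Esp n => (r/rS) • a) ⁻¹' (ball 0 r) = ball (0:Esp n) rS := by
  have hl : 0 < r / rS := div_pos hr hrS
  have hrr : r/rS * rS = r := div_mul_cancel₀ r hrS.ne'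
  ext a
  simp only [mem_preimage, mem_ball_zero_iff, norm_smul, Real.norm_eq_abs, abs_of_pos hl]
  constructor <;> intro h
  · nlinarith [norm_nonneg a]
  · calc r/rS * ‖a‖ < r/rS * rS := by exact (mul_lt_mul_iff_right₀ hl).mpr h
    _ = r := hrr

lemma volume_ball_scaling {n : ℕ} (r rS : ℝ) (hr : 0 < r) (hrS : 0 < rS) :
    volume (ball (0:Esp n) r) = ENNReal.ofReal ((r/rS)^n) * volume (ball (0:Esp n) rS) := by
  have hl : 0 < r / rS := div_pos hr hrS
  have h1 : (r/rS) • ball (0:Esp n) rS = ball (0:Esp n) r := by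
    rw [smul_ball hl.ne' (0:Esp n) rS, smul_zero, Real.norm_eq_abs, abs_of_pos hl,
      div_mul_cancel₀ r hrS.ne']
  rw [← h1, Measure.addHaar_smul_of_nonneg volume hl.le, finrank_euclideanSpace_fin]

lemma map_scaling_unif {n : ℕ} (r rS : ℝ) (hr : 0 < r) (hrS : 0 < rS) :
    (unif (ball (0:Esp n) rS)).map (fun a => (r/rS) • a) = unif (ball (0:Esp n) r) := by
  have hl : 0 < r / rS := div_pos hr hrS
  have hB : volume (ball (0:Esp n) rS) ≠ 0 := (measure_ball_pos volume 0 hrS).ne'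
  have hBt : volume (ball (0:Esp n) rS) ≠ ⊤ := measure_ball_lt_top.ne
  have hpow : (0:ℝ) < (r/rS)^n := pow_pos hl n
  have key : (volume.restrict (ball (0:Esp n) rS)).map (fun a => (r/rS) • a)
      = (ENNReal.ofReal ((r/rS)^n))⁻¹ • volume.restrict (ball (0:Esp n) r) := by
    rw [← preimage_scaling_ball r rS hr hrS,
      ← Measure.restrict_map (measurable_const_smul (r/rS)) measurableSet_ball,
      Measure.map_addHaar_smul volume hl.ne', finrank_euclideanSpace_fin,
      abs_of_pos (inv_pos.mpr hpow), ENNReal.ofReal_inv_of_pos hpow,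
      Measure.restrict_smul]
  rw [unif, unif, Measure.map_smul, key, smul_smul, volume_ball_scaling r rS hr hrS,
    ENNReal.mul_inv (Or.inr hBt) (Or.inl ENNReal.ofReal_ne_top), mul_comm]

lemma gammastar_mem {n : ℕ} (r rS : ℝ) (hr : 0 < r) (hrS : 0 < rS) :
    (unif (ball (0:Esp n) rS)).map (fun a => (a, (r/rS) • a)) ∈
      couplings (unif (ball (0:Esp n) rS)) (unif (ball (0:Esp n) r)) := by
  have hmT : Measurable fun a : Esp n => (a, (r/rS) • a) :=
    measurable_id.prodMk (measurable_const_smul _)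
  constructor
  · rw [Measure.map_map measurable_fst hmT]
    simp [Function.comp_def]
  · rw [Measure.map_map measurable_snd hmT]
    exact map_scaling_unif r rS hr hrS

lemma gammastar_cost {n : ℕ} (r rS : ℝ) (hr : 0 < r) (hrS : 0 < rS) (hrrS : r ≤ rS) :
    ∫⁻ w, edist w.1 w.2 ^ 2 ∂((unif (ball (0:Esp n) rS)).map (fun a => (a, (r/rS) • a)))
      = ENNReal.ofReal ((1 - r/rS)^2)
          * ∫⁻ a, ENNReal.ofReal (‖a‖^2) ∂(unif (ball (0:Esp n) rS)) := by
  have hmT : Measurable fun a : Esp n => (a, (r/rS) • a) :=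
    measurable_id.prodMk (measurable_const_smul _)
  have hl1 : r/rS ≤ 1 := (div_le_one hrS).mpr hrrS
  rw [lintegral_map measurable_edistsq hmT]
  have hpt : ∀ a : Esp n, edist a ((r/rS) • a) ^ 2
      = ENNReal.ofReal ((1 - r/rS)^2 * ‖a‖^2) := by
    intro a
    rw [edist_dist, ← ENNReal.ofReal_pow dist_nonneg, dist_eq_norm]
    congr 1
    have : a - (r/rS) • a = (1 - r/rS) • a := by
      rw [sub_smul, one_smul]
    rw [this, norm_smul, Real.norm_eq_abs, abs_of_nonneg (by linarith), mul_pow]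
  simp_rw [hpt]
  exact lint_const_sq _ (sq_nonneg _)

lemma moment_ball_r {n : ℕ} (r rS : ℝ) (hr : 0 < r) (hrS : 0 < rS) :
    ∫⁻ b, ENNReal.ofReal (‖b‖^2) ∂(unif (ball (0:Esp n) r))
      = ENNReal.ofReal ((r/rS)^2)
          * ∫⁻ a, ENNReal.ofReal (‖a‖^2) ∂(unif (ball (0:Esp n) rS)) := by
  rw [← map_scaling_unif r rS hr hrS, lintegral_map measurable_gaux
    (measurable_const_smul _)]
  have hl : 0 < r/rS := div_pos hr hrS
  have hpt : ∀ a : Esp n, ENNReal.ofReal (‖(r/rS) • a‖^2)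
      = ENNReal.ofReal ((r/rS)^2 * ‖a‖^2) := by
    intro a
    rw [norm_smul, Real.norm_eq_abs, abs_of_pos hl, mul_pow]
  simp_rw [hpt]
  exact lint_const_sq _ (sq_nonneg _)

-- second moment of unif ball finite / bounded
lemma moment_le {n : ℕ} (μ : Measure (Esp n)) [IsProbabilityMeasure μ] (rS : ℝ)
    (hsupp : ∀ᵐ a ∂μ, a ∈ ball (0:Esp n) rS) :
    ∫⁻ a, ENNReal.ofReal (‖a‖^2) ∂μ ≤ ENNReal.ofReal (rS^2) := by
  calc ∫⁻ a, ENNReal.ofReal (‖a‖^2) ∂μ ≤ ∫⁻ _, ENNReal.ofReal (rS^2) ∂μ := by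
        refine lintegral_mono_ae (hsupp.mono fun a ha => ?_)
        refine ENNReal.ofReal_le_ofReal ?_
        have h1 : ‖a‖ < rS := mem_ball_zero_iff.mp ha
        nlinarith [norm_nonneg a]
    _ = ENNReal.ofReal (rS^2) := by rw [lintegral_const, measure_univ, mul_one]

lemma unif_ae_ball {n : ℕ} (r : ℝ) (hr : 0 < r) :
    ∀ᵐ a ∂(unif (ball (0:Esp n) r)), a ∈ ball (0:Esp n) r := by
  rw [ae_iff]
  have : {a : Esp n | ¬ a ∈ ball (0:Esp n) r} = (ball (0:Esp n) r)ᶜ := rfl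
  rw [this, unif_apply _ _ measurableSet_ball.compl, compl_inter_self, measure_empty, mul_zero]

lemma bathtub {n : ℕ} (rS 𝒱 : ℝ) (hrS : 0 < rS)
    (h𝒱 : volume (ball (0:Esp n) rS) = ENNReal.ofReal 𝒱)
    (μ : Measure (Esp n)) [IsProbabilityMeasure μ]
    (hdom : ∀ A : Set (Esp n), MeasurableSet A → μ A ≤ volume A / ENNReal.ofReal 𝒱) :
    (∫⁻ a, ENNReal.ofReal (‖a‖^2) ∂(unif (ball (0:Esp n) rS))
        ≤ ∫⁻ a, ENNReal.ofReal (‖a‖^2) ∂μ)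
    ∧ (∫⁻ a, ENNReal.ofReal (‖a‖^2) ∂μ
        = ∫⁻ a, ENNReal.ofReal (‖a‖^2) ∂(unif (ball (0:Esp n) rS))
        → μ = unif (ball (0:Esp n) rS)) := by
  set B := ball (0:Esp n) rS with hBdef
  have hB : MeasurableSet B := measurableSet_ball
  have hvol0 : volume B ≠ 0 := (measure_ball_pos volume 0 hrS).ne'
  have hvolt : volume B ≠ ⊤ := measure_ball_lt_top.ne
  set P := unif B with hPdef
  haveI hPprob : IsProbabilityMeasure P := unif_prob B hvol0 hvolt
  set g := fun a : Esp n => ENNReal.ofReal (‖a‖^2) with hgdef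
  have hg : Measurable g := measurable_gaux
  have hPB : P B = 1 := by
    rw [hPdef, unif_apply _ _ hB, inter_self, ENNReal.inv_mul_cancel hvol0 hvolt]
  have hPBc : P Bᶜ = 0 := by
    rw [hPdef, unif_apply _ _ hB.compl, compl_inter_self, measure_empty, mul_zero]
  -- μ.restrict B ≤ P.restrict B
  have hle : μ.restrict B ≤ P.restrict B := by
    refine Measure.le_iff.mpr fun s hs => ?_
    rw [Measure.restrict_apply hs, Measure.restrict_apply hs, hPdef,
      unif_apply _ _ (hs.inter hB), inter_assoc, inter_self, h𝒱]
    calc μ (s ∩ B) ≤ volume (s ∩ B) / ENNReal.ofReal 𝒱 := hdom _ (hs.inter hB)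
      _ = (ENNReal.ofReal 𝒱)⁻¹ * volume (s ∩ B) := by rw [div_eq_mul_inv, mul_comm]
  set σ := P.restrict B - μ.restrict B with hσdef
  have hdecomp : σ + μ.restrict B = P.restrict B := Measure.sub_add_cancel_of_le hle
  have hσuniv : σ univ = μ Bᶜ := by
    rw [hσdef, Measure.sub_apply MeasurableSet.univ hle, Measure.restrict_apply_univ,
      Measure.restrict_apply_univ, hPB, prob_compl_eq_one_sub hB]
  have hσB : ∀ᵐ a ∂σ, a ∈ B := by
    rw [ae_iff]
    have h1 : {a : Esp n | ¬ a ∈ B} = Bᶜ := rfl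
    rw [h1]
    refine le_antisymm ?_ zero_le
    calc σ Bᶜ ≤ P.restrict B Bᶜ := Measure.le_iff'.mp Measure.sub_le Bᶜ
      _ = P (Bᶜ ∩ B) := Measure.restrict_apply hB.compl
      _ = 0 := by rw [compl_inter_self, measure_empty]
  -- pointwise bounds
  have hgm : ∀ a ∈ B, g a ≤ ENNReal.ofReal (rS^2) := by
    intro a ha
    have h1 : ‖a‖ < rS := mem_ball_zero_iff.mp ha
    exact ENNReal.ofReal_le_ofReal (by nlinarith [norm_nonneg a])
  have hgmc : ∀ a ∈ Bᶜ, ENNReal.ofReal (rS^2) ≤ g a := by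
    intro a ha
    have h1 : rS ≤ ‖a‖ := by
      by_contra hcon
      exact ha (mem_ball_zero_iff.mpr (not_le.mp hcon))
    exact ENNReal.ofReal_le_ofReal (by nlinarith [norm_nonneg a])
  -- the five quantities
  set MP := ∫⁻ a, g a ∂P with hMPdef
  set X := ∫⁻ a in B, g a ∂μ with hXdef
  set u := ∫⁻ a in Bᶜ, g a ∂μ with hudef
  set s₀ := ∫⁻ a, g a ∂σ with hs₀def
  set t := ENNReal.ofReal (rS^2) * μ Bᶜ with htdef
  have h1 : MP = s₀ + X := by
    have e1 : ∫⁻ a in Bᶜ, g a ∂P = 0 := setLIntegral_measure_zero _ _ hPBc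
    have e2 : MP = ∫⁻ a in B, g a ∂P := by
      rw [hMPdef, ← lintegral_add_compl g hB, e1, add_zero]
    rw [e2, ← hdecomp]
    exact lintegral_add_measure g σ (μ.restrict B)
  have h2 : ∫⁻ a, g a ∂μ = X + u := (lintegral_add_compl g hB).symm
  have hst : s₀ ≤ t := by
    calc s₀ ≤ ∫⁻ _, ENNReal.ofReal (rS^2) ∂σ :=
          lintegral_mono_ae (hσB.mono fun a ha => hgm a ha)
      _ = ENNReal.ofReal (rS^2) * σ univ := lintegral_const _
      _ = t := by rw [hσuniv]
  have htu : t ≤ u := by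
    calc t = ∫⁻ _ in Bᶜ, ENNReal.ofReal (rS^2) ∂μ := (setLIntegral_const _ _).symm
      _ ≤ u := lintegral_mono_ae ((ae_restrict_iff' hB.compl).mpr (ae_of_all _ hgmc))
  constructor
  · -- part 1 : MP ≤ ∫ g dμ
    calc MP = s₀ + X := h1
      _ ≤ u + X := add_le_add_left (hst.trans htu) X
      _ = X + u := add_comm _ _
      _ = ∫⁻ a, g a ∂μ := h2.symm
  · -- part 2 : equality implies μ = P
    intro hEq
    have hXfin : X ≠ ⊤ := by
      have hb : X ≤ ENNReal.ofReal (rS^2) * μ B :=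
        (lintegral_mono_ae ((ae_restrict_iff' hB).mpr (ae_of_all _ hgm))).trans_eq
          (setLIntegral_const _ _)
      have hb2 : ENNReal.ofReal (rS^2) * μ B ≤ ENNReal.ofReal (rS^2) :=
        mul_le_of_le_one_right zero_le prob_le_one
      exact ne_of_lt (lt_of_le_of_lt (hb.trans hb2) ENNReal.ofReal_lt_top)
    have hsu : s₀ = u := by
      have : X + s₀ = X + u := by
        rw [add_comm X s₀, ← h1, ← hEq, h2]
      exact (ENNReal.add_right_inj hXfin).mp this
    have hs₀t : s₀ = t := le_antisymm hst (hsu ▸ htu)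
    have htu' : t = u := by rw [← hsu, hs₀t]
    have htfin : t ≠ ⊤ := by
      have hb2 : t ≤ ENNReal.ofReal (rS^2) :=
        mul_le_of_le_one_right zero_le prob_le_one
      exact ne_of_lt (lt_of_le_of_lt hb2 ENNReal.ofReal_lt_top)
    -- σ = 0
    have hσ0 : σ = 0 := by
      have hsubeq : ∫⁻ a, (ENNReal.ofReal (rS^2) - g a) ∂σ = 0 := by
        rw [lintegral_sub hg (by rw [← hs₀def]; exact hs₀t ▸ htfin)
          (hσB.mono fun a ha => hgm a ha), lintegral_const, hσuniv, ← htdef, ← hs₀def,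
          ← hs₀t, tsub_self]
      have hae : (fun a => ENNReal.ofReal (rS^2) - g a) =ᵐ[σ] 0 :=
        (lintegral_eq_zero_iff (measurable_const.sub hg)).mp hsubeq
      have : ∀ᵐ _a ∂σ, False := by
        filter_upwards [hae, hσB] with a ha1 ha2
        have hlt : g a < ENNReal.ofReal (rS^2) := by
          have h1 : ‖a‖ < rS := mem_ball_zero_iff.mp ha2
          refine ENNReal.ofReal_lt_ofReal_iff (by positivity) |>.mpr ?_
          nlinarith [norm_nonneg a]
        have := tsub_eq_zero_iff_le.mp ha1
        exact absurd this (not_le.mpr hlt)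
      have h0 : σ univ = 0 := by
        have := ae_iff.mp this
        simpa using this
      exact Measure.measure_univ_eq_zero.mp h0
    have hresB : P.restrict B = μ.restrict B := by
      rw [← hdecomp, hσ0, zero_add]
    -- μ Bᶜ = 0
    have hμBc : μ Bᶜ = 0 := by
      have hsubeq : ∫⁻ a in Bᶜ, (g a - ENNReal.ofReal (rS^2)) ∂μ = 0 := by
        rw [lintegral_sub measurable_const (by rw [setLIntegral_const]; exact htfin)
          ((ae_restrict_iff' hB.compl).mpr (ae_of_all _ hgmc)), setLIntegral_const,
          ← hudef, ← htdef, ← htu', tsub_self]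
      have hae : (fun a => g a - ENNReal.ofReal (rS^2)) =ᵐ[μ.restrict Bᶜ] 0 :=
        (lintegral_eq_zero_iff (hg.sub measurable_const)).mp hsubeq
      have hsph : ∀ᵐ a ∂(μ.restrict Bᶜ), a ∈ sphere (0:Esp n) rS := by
        filter_upwards [hae, (ae_restrict_iff' hB.compl).mpr
          (ae_of_all _ (fun a (ha : a ∈ Bᶜ) => hgmc a ha))] with a ha1 ha2
        have hle' : g a ≤ ENNReal.ofReal (rS^2) := tsub_eq_zero_iff_le.mp ha1
        have heq : g a = ENNReal.ofReal (rS^2) := le_antisymm hle' ha2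
        have heq2 : ‖a‖^2 = rS^2 := by
          have := (ENNReal.ofReal_eq_ofReal_iff (sq_nonneg _) (sq_nonneg _)).mp heq
          exact this
        have : (‖a‖ - rS) * (‖a‖ + rS) = 0 := by ring_nf; nlinarith [heq2]
        rcases mul_eq_zero.mp this with h | h
        · exact mem_sphere_zero_iff_norm.mpr (by linarith)
        · nlinarith [norm_nonneg a]
      have hsphere0 : μ (sphere (0:Esp n) rS) = 0 := by
        have hv : volume (sphere (0:Esp n) rS) = 0 :=
          Measure.addHaar_sphere_of_ne_zero volume 0 hrS.ne'
        refine le_antisymm ?_ zero_le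
        calc μ (sphere (0:Esp n) rS) ≤ volume (sphere (0:Esp n) rS) / ENNReal.ofReal 𝒱 :=
              hdom _ isClosed_sphere.measurableSet
          _ = 0 := by rw [hv, ENNReal.zero_div]
      have : μ.restrict Bᶜ univ = 0 := by
        refine le_antisymm ?_ zero_le
        have h1 : μ.restrict Bᶜ (sphere (0:Esp n) rS)ᶜ = 0 := by
          have := ae_iff.mp hsph
          simpa [compl_def] using this
        have h2 : μ.restrict Bᶜ (sphere (0:Esp n) rS) ≤ μ (sphere (0:Esp n) rS) :=
          Measure.restrict_le_self _
        calc μ.restrict Bᶜ univ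
            ≤ μ.restrict Bᶜ (sphere (0:Esp n) rS) + μ.restrict Bᶜ (sphere (0:Esp n) rS)ᶜ := by
              rw [← union_compl_self (sphere (0:Esp n) rS)]; exact measure_union_le _ _
          _ ≤ 0 := by rw [h1, add_zero]; exact h2.trans_eq hsphere0
      rwa [Measure.restrict_apply_univ] at this
    -- conclude
    have hμres : μ.restrict Bᶜ = 0 := Measure.restrict_eq_zero.mpr hμBc
    have hPres : P.restrict Bᶜ = 0 := Measure.restrict_eq_zero.mpr hPBc
    calc μ = μ.restrict B + μ.restrict Bᶜ := (Measure.restrict_add_restrict_compl hB).symm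
      _ = P.restrict B + P.restrict Bᶜ := by rw [hresB, hμres, hPres]
      _ = P := Measure.restrict_add_restrict_compl hB

lemma master {n : ℕ} (r rS 𝒱 : ℝ) (hr : 0 < r) (hrS : 0 < rS) (hrrS : r ≤ rS)
    (h𝒱 : volume (ball (0:Esp n) rS) = ENNReal.ofReal 𝒱)
    (μ : Measure (Esp n)) [IsProbabilityMeasure μ]
    (hdom : ∀ A : Set (Esp n), MeasurableSet A → μ A ≤ volume A / ENNReal.ofReal 𝒱) :
    cost (unif (ball (0:Esp n) rS)) (unif (ball (0:Esp n) r))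
        ≤ cost μ (unif (ball (0:Esp n) r))
      ∧ (cost μ (unif (ball (0:Esp n) r))
          = cost (unif (ball (0:Esp n) rS)) (unif (ball (0:Esp n) r))
          → μ = unif (ball (0:Esp n) rS)) := by
  have hvol0 : volume (ball (0:Esp n) rS) ≠ 0 := (measure_ball_pos volume 0 hrS).ne'
  have hvolt : volume (ball (0:Esp n) rS) ≠ ⊤ := measure_ball_lt_top.ne
  have hvol0r : volume (ball (0:Esp n) r) ≠ 0 := (measure_ball_pos volume 0 hr).ne'
  have hvoltr : volume (ball (0:Esp n) r) ≠ ⊤ := measure_ball_lt_top.ne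
  set P := unif (ball (0:Esp n) rS) with hPdef
  set ν := unif (ball (0:Esp n) r) with hνdef
  haveI hPprob : IsProbabilityMeasure P := unif_prob _ hvol0 hvolt
  haveI hνprob : IsProbabilityMeasure ν := unif_prob _ hvol0r hvoltr
  set l := r / rS with hldef
  have hl0 : 0 < l := div_pos hr hrS
  have hl1 : l ≤ 1 := (div_le_one hrS).mpr hrrS
  set M := ∫⁻ a, ENNReal.ofReal (‖a‖^2) ∂P with hMdef
  set Mμ := ∫⁻ a, ENNReal.ofReal (‖a‖^2) ∂μ with hMμdef
  set Nν := ∫⁻ b, ENNReal.ofReal (‖b‖^2) ∂ν with hNνdef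
  have hMfin : M ≠ ⊤ :=
    ((moment_le P rS (unif_ae_ball rS hrS)).trans_lt ENNReal.ofReal_lt_top).ne
  have hNν : Nν = ENNReal.ofReal (l^2) * M := moment_ball_r r rS hr hrS
  have hNfin : Nν ≠ ⊤ := by
    rw [hNν]; exact ENNReal.mul_ne_top ENNReal.ofReal_ne_top hMfin
  set K := ENNReal.ofReal (1/l - 1) * Nν with hKdef
  have hKfin : K ≠ ⊤ := ENNReal.mul_ne_top ENNReal.ofReal_ne_top hNfin
  set cstar := ENNReal.ofReal ((1-l)^2) * M with hcstardef
  have hcfin : cstar ≠ ⊤ := ENNReal.mul_ne_top ENNReal.ofReal_ne_top hMfin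
  have halg : cstar + K = ENNReal.ofReal (1-l) * M := by
    rw [hcstardef, hKdef, hNν, ← mul_assoc, ← ENNReal.ofReal_mul (by
      have : (1:ℝ) ≤ 1/l := by rw [le_div_iff₀ hl0]; linarith
      linarith), ← add_mul, ← ENNReal.ofReal_add (sq_nonneg _) (mul_nonneg (by
        have : (1:ℝ) ≤ 1/l := by rw [le_div_iff₀ hl0]; linarith
        linarith) (sq_nonneg _))]
    congr 2
    field_simp
    ring
  -- bathtub conclusions
  have hbt := bathtub rS 𝒱 hrS h𝒱 μ hdom
  have hMle : M ≤ Mμ := hbt.1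
  -- cost of P equals cstar
  have hcostP : cost P ν = cstar := by
    apply le_antisymm
    · calc cost P ν ≤ ∫⁻ w, edist w.1 w.2 ^ 2
            ∂((unif (ball (0:Esp n) rS)).map (fun a => (a, (r/rS) • a))) :=
          iInf₂_le _ (gammastar_mem r rS hr hrS)
        _ = cstar := gammastar_cost r rS hr hrS hrrS
    · refine le_iInf₂ fun γ hγ => ?_
      have h := coupling_bound hγ hl0 hl1
      rw [← hMdef, ← hNνdef, ← hKdef, ← halg] at h
      exact (ENNReal.add_le_add_iff_right hKfin).mp h
  -- lower bound for class members
  have hge : cstar ≤ cost μ ν := by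
    refine le_iInf₂ fun γ hγ => ?_
    have h := coupling_bound hγ hl0 hl1
    rw [← hMμdef, ← hNνdef, ← hKdef] at h
    have h2 : cstar + K ≤ (∫⁻ w, edist w.1 w.2 ^ 2 ∂γ) + K := by
      rw [halg]
      exact le_trans (mul_le_mul_right hMle _) h
    exact (ENNReal.add_le_add_iff_right hKfin).mp h2
  refine ⟨hcostP ▸ hge, ?_⟩
  -- equality case
  intro hceq
  rw [hcostP] at hceq
  -- the δ-family of inequalities
  have hδ : ∀ δ : ℝ, 0 < δ → δ < 1 →
      ENNReal.ofReal (1-δ) * Mμ ≤ cstar + ENNReal.ofReal (1/δ - 1) * Nν := by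
    intro δ h0 h1
    refine ENNReal.le_of_forall_pos_le_add fun ε hε hlt => ?_
    have hclt : cost μ ν < cstar + ε := by
      rw [hceq]
      exact ENNReal.lt_add_right hcfin (by exact_mod_cast hε.ne')
    rw [cost] at hclt
    obtain ⟨γ, hγlt⟩ := iInf_lt_iff.mp hclt
    obtain ⟨hγ, hIγ⟩ := iInf_lt_iff.mp hγlt
    have h := coupling_bound hγ h0 h1.le
    rw [← hMμdef, ← hNνdef] at h
    calc ENNReal.ofReal (1-δ) * Mμ
        ≤ (∫⁻ w, edist w.1 w.2 ^ 2 ∂γ) + ENNReal.ofReal (1/δ - 1) * Nν := h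
      _ ≤ (cstar + ε) + ENNReal.ofReal (1/δ - 1) * Nν := add_le_add_left hIγ.le _
      _ = cstar + ENNReal.ofReal (1/δ - 1) * Nν + ε := by ring
  -- conclude Mμ ≤ M
  have hMμM : Mμ ≤ M := by
    rcases lt_or_eq_of_le hl1 with hllt | hleq
    · have h := hδ l hl0 hllt
      rw [← hKdef, halg] at h
      exact (ENNReal.mul_le_mul_iff_right (by
        simp only [ne_eq, ENNReal.ofReal_eq_zero, not_le]; linarith) ENNReal.ofReal_ne_top).mp h
    · -- l = 1
      have hN1 : Nν = M := by rw [hNν, hleq]; simp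
      have hc0 : cstar = 0 := by rw [hcstardef, hleq]; simp
      have hMμfin : Mμ ≠ ⊤ := by
        intro hcon
        have h := hδ (1/2) (by norm_num) (by norm_num)
        rw [hcon, hc0, zero_add, ENNReal.mul_top (by norm_num), hN1] at h
        exact (lt_of_le_of_lt h (lt_of_le_of_lt (mul_le_of_le_one_left zero_le
          (ENNReal.ofReal_le_one.mpr (by norm_num))) hMfin.lt_top)).ne rfl
      have hreal : ∀ δ : ℝ, 0 < δ → δ < 1 → (1-δ) * Mμ.toReal ≤ (1/δ - 1) * M.toReal := by
        intro δ h0 h1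
        have h := hδ δ h0 h1
        rw [hc0, zero_add, hN1] at h
        have := ENNReal.toReal_mono (ENNReal.mul_ne_top ENNReal.ofReal_ne_top hMfin) h
        rwa [ENNReal.toReal_mul, ENNReal.toReal_mul, ENNReal.toReal_ofReal (by linarith),
          ENNReal.toReal_ofReal (by
            have : (1:ℝ) ≤ 1/δ := by rw [le_div_iff₀ h0]; linarith
            linarith)] at this
      have hrle : Mμ.toReal ≤ M.toReal := by
        by_contra hcon
        push_neg at hcon
        have hMμpos : 0 < Mμ.toReal := lt_of_le_of_lt ENNReal.toReal_nonneg hcon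
        set δ0 := (M.toReal + Mμ.toReal) / (2 * Mμ.toReal) with hδ0def
        have hM0 : 0 ≤ M.toReal := ENNReal.toReal_nonneg
        have h01 : 0 < δ0 := div_pos (by linarith) (by linarith)
        have h02 : δ0 < 1 := by
          rw [hδ0def, div_lt_one (by linarith)]
          linarith
        have hkey := hreal δ0 h01 h02
        have h1δ0 : 0 < 1 - δ0 := by linarith
        have step : δ0 * ((1-δ0) * Mμ.toReal) ≤ δ0 * ((1/δ0 - 1) * M.toReal) :=
          mul_le_mul_of_nonneg_left hkey h01.le
        have step2 : δ0 * ((1/δ0 - 1) * M.toReal) = (1 - δ0) * M.toReal := by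
          field_simp
        have step3 : (1-δ0) * (δ0 * Mμ.toReal) ≤ (1-δ0) * M.toReal := by
          rw [← step2]; linarith [step]
        have step4 : δ0 * Mμ.toReal ≤ M.toReal :=
          le_of_mul_le_mul_left (by linarith [step3]) h1δ0
        have step5 : δ0 * Mμ.toReal = (M.toReal + Mμ.toReal)/2 := by
          rw [hδ0def]; field_simp
        linarith
      exact (ENNReal.toReal_le_toReal hMμfin hMfin).mp hrle
  have hMeq : Mμ = M := le_antisymm hMμM hMle
  exact hbt.2 hMeq

lemma r_le_rS {n : ℕ} (hn : 1 ≤ n) (r rS 𝒱 : ℝ) (hr : 0 < r) (hrS : 0 < rS)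
    (h𝒱 : (volume (ball (0 : Esp n) r)).toReal ≤ 𝒱)
    (hrS𝒱 : volume (ball (0 : Esp n) rS) = ENNReal.ofReal 𝒱) : r ≤ rS := by
  have hvoltr : volume (ball (0:Esp n) r) ≠ ⊤ := measure_ball_lt_top.ne
  have hvol0r : volume (ball (0:Esp n) r) ≠ 0 := (measure_ball_pos volume 0 hr).ne'
  have h1 : volume (ball (0:Esp n) r) ≤ volume (ball (0:Esp n) rS) := by
    rw [hrS𝒱, ← ENNReal.ofReal_toReal hvoltr]
    exact ENNReal.ofReal_le_ofReal h𝒱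
  by_contra hcon
  push_neg at hcon
  have h2 := volume_ball_scaling (n := n) rS r hrS hr
  have hlt : ENNReal.ofReal ((rS/r)^n) < 1 := by
    rw [← ENNReal.ofReal_one]
    refine (ENNReal.ofReal_lt_ofReal_iff (by norm_num)).mpr ?_
    exact pow_lt_one₀ (by positivity) ((div_lt_one hr).mpr hcon) (by omega)
  have h3 : volume (ball (0:Esp n) rS) < volume (ball (0:Esp n) r) := by
    calc volume (ball (0:Esp n) rS)
        = ENNReal.ofReal ((rS/r)^n) * volume (ball (0:Esp n) r) := h2
      _ < 1 * volume (ball (0:Esp n) r) :=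
        (ENNReal.mul_lt_mul_iff_left hvol0r hvoltr).mpr hlt
      _ = volume (ball (0:Esp n) r) := one_mul _
  exact absurd h1 (not_le.mpr h3)

/-- **Reduction to optimal partial transport.** Let `B_r = B(0, r) ⊆ ℝⁿ` and
`vol(B_r) ≤ 𝒱 < ∞`, and let `r^{#} > 0` satisfy `vol(B(0, r^{#})) = 𝒱`. Among all Borel
probability measures `μ` on `ℝⁿ` dominated by the density `1/𝒱` (i.e.
`μ(A) ≤ vol(A)/𝒱` for every Borel set `A`), the uniform measure on the concentric ball
`B(0, r^{#})` minimizes `W₂(μ, P_{B_r})`, and it is the unique minimizer. -/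
theorem reduction_to_optimal_partial_transport (n : ℕ) (hn : 1 ≤ n) (r : ℝ) (hr : 0 < r)
    (𝒱 : ℝ) (h𝒱 : (volume (ball (0 : EuclideanSpace ℝ (Fin n)) r)).toReal ≤ 𝒱)
    (rS : ℝ) (hrS : 0 < rS)
    (hrS𝒱 : volume (ball (0 : EuclideanSpace ℝ (Fin n)) rS) = ENNReal.ofReal 𝒱) :
    (∀ μ : Measure (EuclideanSpace ℝ (Fin n)), IsProbabilityMeasure μ →
      (∀ A : Set (EuclideanSpace ℝ (Fin n)), MeasurableSet A →
        μ A ≤ volume A / ENNReal.ofReal 𝒱) →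
      W2 (unif (ball (0 : EuclideanSpace ℝ (Fin n)) rS))
          (unif (ball (0 : EuclideanSpace ℝ (Fin n)) r)) ≤
        W2 μ (unif (ball (0 : EuclideanSpace ℝ (Fin n)) r))) ∧
    (∀ μ : Measure (EuclideanSpace ℝ (Fin n)), IsProbabilityMeasure μ →
      (∀ A : Set (EuclideanSpace ℝ (Fin n)), MeasurableSet A →
        μ A ≤ volume A / ENNReal.ofReal 𝒱) →
      W2 μ (unif (ball (0 : EuclideanSpace ℝ (Fin n)) r)) =
        W2 (unif (ball (0 : EuclideanSpace ℝ (Fin n)) rS))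
          (unif (ball (0 : EuclideanSpace ℝ (Fin n)) r)) →
      μ = unif (ball (0 : EuclideanSpace ℝ (Fin n)) rS)) := by
  have hrrS : r ≤ rS := r_le_rS hn r rS 𝒱 hr hrS h𝒱 hrS𝒱
  constructor
  · intro μ hμ hdom
    haveI := hμ
    rw [W2_eq_cost, W2_eq_cost]
    exact ENNReal.rpow_le_rpow
      ((master r rS 𝒱 hr hrS hrrS hrS𝒱 μ hdom).1) (by norm_num)
  · intro μ hμ hdom hW
    haveI := hμ
    refine (master r rS 𝒱 hr hrS hrrS hrS𝒱 μ hdom).2 ?_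
    rw [W2_eq_cost, W2_eq_cost] at hW
    exact (ENNReal.strictMono_rpow_of_pos (by norm_num : (0:ℝ) < 1/2)).injective hW


end
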